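/- (Continuity of invariant measures) Let (X, d) be a compact metric space. For each n, let μₙ be the invariant measure of the contractive IFS {f_{n,1},…,f_{n,N}} with probability vector (p_{n,1},…,p_{n,N}), and let μ be the invariant measure of {f₁,…,f_N} with probability vector (p₁,…,p_N). If f_{n,j} → f_j uniformly on X and p_{n,j} → p_j for all 1 ≤ j ≤ N, then μₙ → μ in the Hutchinson (dual-Lipschitz/Wasserstein-1) metric d_H(μ, ν) = sup{ |∫ g dμ − ∫ g dν| : Lip(g) ≤ 1 }, equivalently μₙ → μ weakly. -/

import Mathlib

open Filter Topology MeasureTheory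

/-- The Hutchinson (dual-Lipschitz / Wasserstein-1) distance between two measures. -/
noncomputable def dHutch {X : Type*} [MetricSpace X] [MeasurableSpace X]
    (μ ν : Measure X) : ℝ :=
  sSup { d : ℝ | ∃ g : X → ℝ, LipschitzWith 1 g ∧ d = |∫ x, g x ∂μ - ∫ x, g x ∂ν| }

lemma cont_integrable {X : Type*} [MetricSpace X] [CompactSpace X] [MeasurableSpace X]
    [BorelSpace X] (ν : Measure X) [IsFiniteMeasure ν] {g : X → ℝ} (hg : Continuous g) :
    Integrable g ν :=
  hg.integrable_of_hasCompactSupport (HasCompactSupport.of_compactSpace g)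

lemma integral_invariant_aux {X : Type*} [MetricSpace X] [CompactSpace X] [MeasurableSpace X]
    [BorelSpace X] {N : ℕ} (ν : Measure X) [IsProbabilityMeasure ν]
    {q : Fin N → ℝ} (hq : ∀ j, 0 ≤ q j)
    {F : Fin N → X → X} (hF : ∀ j, Continuous (F j))
    (hν : ν = ∑ j, ENNReal.ofReal (q j) • (ν.map (F j)))
    {h : X → ℝ} (hh : Continuous h) :
    ∫ x, h x ∂ν = ∑ j, q j * ∫ x, h (F j x) ∂ν := by
  have hmap : ∀ j, IsProbabilityMeasure (ν.map (F j)) :=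
    fun j => Measure.isProbabilityMeasure_map (hF j).measurable.aemeasurable
  have hint : ∀ j : Fin N, Integrable h (ENNReal.ofReal (q j) • ν.map (F j)) := by
    intro j
    have := hmap j
    exact (cont_integrable _ hh).smul_measure ENNReal.ofReal_ne_top
  conv_lhs => rw [hν]
  rw [integral_finset_sum_measure fun j _ => hint j]
  refine Finset.sum_congr rfl fun j _ => ?_
  rw [integral_smul_measure, ENNReal.toReal_ofReal (hq j),
    integral_map (hF j).measurable.aemeasurable hh.aestronglyMeasurable]
  simp

lemma lipschitz_approx {X : Type*} [MetricSpace X] [CompactSpace X] [Nonempty X]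
    (g : X → ℝ) (hg : Continuous g) {ε : ℝ} (hε : 0 < ε) :
    ∃ (Kr : ℝ) (h : X → ℝ), 0 ≤ Kr ∧ LipschitzWith Kr.toNNReal h ∧ ∀ x, |g x - h x| ≤ ε := by
  have hgu : UniformContinuous g := CompactSpace.uniformContinuous_of_continuous hg
  obtain ⟨δ, hδ, hδ'⟩ := Metric.uniformContinuous_iff.mp hgu ε hε
  obtain ⟨M, hM⟩ : ∃ M : ℝ, ∀ x, |g x| ≤ M := by
    obtain ⟨C, hC⟩ := (isCompact_range hg).isBounded.subset_ball 0
    exact ⟨C, fun x => by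
      have := hC ⟨x, rfl⟩
      simpa [Real.dist_eq] using le_of_lt (Metric.mem_ball.mp this)⟩
  have hM0 : 0 ≤ M := le_trans (abs_nonneg _) (hM (Classical.arbitrary X))
  set Kr : ℝ := 2 * M / δ with hKr
  have hKr0 : 0 ≤ Kr := by positivity
  set h : X → ℝ := fun x => ⨅ y : X, (g y + Kr * dist x y) with hh
  have B : ∀ x : X, BddBelow (Set.range fun y : X => g y + Kr * dist x y) := by
    intro x
    refine ⟨-M, ?_⟩
    rintro w ⟨y, rfl⟩
    show -M ≤ g y + Kr * dist x y
    have := (abs_le.mp (hM y)).1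
    nlinarith [dist_nonneg (x := x) (y := y), mul_nonneg hKr0 (dist_nonneg (x := x) (y := y))]
  have hle : ∀ x, h x ≤ g x := by
    intro x
    simpa using ciInf_le (B x) x
  have hge : ∀ x, g x - ε ≤ h x := by
    intro x
    refine le_ciInf fun y => ?_
    rcases lt_or_ge (dist x y) δ with hd | hd
    · have := (abs_lt.mp (by simpa [Real.dist_eq] using hδ' (by simpa [dist_comm] using hd))).2
      nlinarith [mul_nonneg hKr0 dist_nonneg (a := Kr) (b := dist x y)]
    · have h1 : Kr * δ ≤ Kr * dist x y := by nlinarith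
      have h2 := (abs_le.mp (hM y)).1
      have h3 : g x ≤ M := (abs_le.mp (hM x)).2
      rcases eq_or_lt_of_le hM0 with hM' | hM'
      · nlinarith [(abs_le.mp (hM y)).1, mul_nonneg hKr0 dist_nonneg (a := Kr) (b := dist x y)]
      · have : Kr * δ = 2 * M := by rw [hKr]; field_simp
        nlinarith [(abs_le.mp (hM y)).1]
  refine ⟨Kr, h, hKr0, ?_, fun x => ?_⟩
  · refine LipschitzWith.of_le_add_mul _ fun x y => ?_
    rw [Real.coe_toNNReal _ hKr0, ← sub_le_iff_le_add]
    refine le_ciInf fun z => ?_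
    rw [sub_le_iff_le_add]
    calc h x ≤ g z + Kr * dist x z := ciInf_le (B x) z
      _ ≤ g z + Kr * dist y z + Kr * dist x y := by
          have := dist_triangle x y z
          nlinarith
  · have := hle x; have := hge x
    rw [abs_le]; constructor <;> linarith
theorem invariant_measures_continuity {X : Type*} [MetricSpace X] [CompactSpace X]
    [Nonempty X] [MeasurableSpace X] [BorelSpace X]
    {N : ℕ}
    (fseq : ℕ → Fin N → X → X) (f : Fin N → X → X)
    (pseq : ℕ → Fin N → ℝ) (p : Fin N → ℝ)
    (μseq : ℕ → Measure X) (μ : Measure X)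
    [∀ n, IsProbabilityMeasure (μseq n)] [IsProbabilityMeasure μ]
    (hcontrseq : ∀ n j, ∃ c : ℝ, c < 1 ∧ ∀ x y, dist (fseq n j x) (fseq n j y) ≤ c * dist x y)
    (hcontr : ∀ j, ∃ c : ℝ, c < 1 ∧ ∀ x y, dist (f j x) (f j y) ≤ c * dist x y)
    (hpseq : ∀ n j, 0 ≤ pseq n j) (hpsumseq : ∀ n, ∑ j, pseq n j = 1)
    (hp : ∀ j, 0 ≤ p j) (hpsum : ∑ j, p j = 1)
    (hinvseq : ∀ n, μseq n = ∑ j, ENNReal.ofReal (pseq n j) • ((μseq n).map (fseq n j)))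
    (hinv : μ = ∑ j, ENNReal.ofReal (p j) • (μ.map (f j)))
    (hfconv : ∀ j, TendstoUniformly (fun n => fseq n j) (f j) atTop)
    (hpconv : ∀ j, Tendsto (fun n => pseq n j) atTop (𝓝 (p j))) :
    Tendsto (fun n => dHutch (μseq n) μ) atTop (𝓝 0) ∧
    ∀ g : X → ℝ, Continuous g →
      Tendsto (fun n => ∫ x, g x ∂(μseq n)) atTop (𝓝 (∫ x, g x ∂μ)) := by
  classical
  obtain ⟨x₀⟩ := (inferInstance : Nonempty X)
  set D := Metric.diam (Set.univ : Set X) with hDdef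
  have hD0 : 0 ≤ D := Metric.diam_nonneg
  have hDd : ∀ x y : X, dist x y ≤ D := fun x y =>
    Metric.dist_le_diam_of_mem isCompact_univ.isBounded trivial trivial
  have hN : N ≠ 0 := by rintro rfl; simp at hpsum
  have hNpos : (0:ℝ) < (N:ℝ) := by exact_mod_cast Nat.pos_of_ne_zero hN
  have : Nonempty (Fin N) := Fin.pos_iff_nonempty.mp (Nat.pos_of_ne_zero hN)
  have hNe : (Finset.univ : Finset (Fin N)).Nonempty := Finset.univ_nonempty
  -- uniform contraction constant
  choose c hc1 hc2 using hcontr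
  set Kr : ℝ := max (1/2) (Finset.univ.sup' hNe fun j => max (c j) 0) with hKrdef
  have hK0 : (0:ℝ) < Kr := lt_of_lt_of_le (by norm_num) (le_max_left _ _)
  have hK1 : Kr < 1 := by
    refine max_lt (by norm_num) ?_
    exact (Finset.sup'_lt_iff hNe).mpr fun j _ => max_lt (hc1 j) one_pos
  have hKc : ∀ j (x y : X), dist (f j x) (f j y) ≤ Kr * dist x y := by
    intro j x y
    refine le_trans (hc2 j x y) (mul_le_mul_of_nonneg_right ?_ dist_nonneg)
    exact le_trans (le_max_left _ _)
      (le_trans (Finset.le_sup' (fun j => max (c j) 0) (Finset.mem_univ j)) (le_max_right _ _))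
  have hfc : ∀ j, Continuous (f j) := by
    intro j
    refine (LipschitzWith.of_dist_le_mul (K := Kr.toNNReal) fun x y => ?_).continuous
    rw [Real.coe_toNNReal _ hK0.le]
    exact hKc j x y
  have hfsc : ∀ n j, Continuous (fseq n j) := by
    intro n j
    obtain ⟨a, _, ha⟩ := hcontrseq n j
    refine (LipschitzWith.of_dist_le_mul (K := a.toNNReal) fun x y => ?_).continuous
    exact le_trans (ha x y) (mul_le_mul_of_nonneg_right (Real.le_coe_toNNReal a) dist_nonneg)
  -- the defining set of dHutch
  set S : ℕ → Set ℝ := fun n =>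
    { d : ℝ | ∃ g : X → ℝ, LipschitzWith 1 g ∧ d = |∫ x, g x ∂(μseq n) - ∫ x, g x ∂μ| }
    with hSdef
  have hdH : ∀ n, dHutch (μseq n) μ = sSup (S n) := fun n => rfl
  have hS0 : ∀ n, (0:ℝ) ∈ S n := by
    intro n
    exact ⟨fun _ => 0, (LipschitzWith.const 0).weaken (zero_le_one), by simp⟩
  -- normalization: replace g by g - g x₀ without changing the difference of integrals
  have hnorm : ∀ (g : X → ℝ), LipschitzWith 1 g → ∀ (ν₁ ν₂ : Measure X),
      IsProbabilityMeasure ν₁ → IsProbabilityMeasure ν₂ →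
      ∫ x, g x ∂ν₁ - ∫ x, g x ∂ν₂
        = ∫ x, (g x - g x₀) ∂ν₁ - ∫ x, (g x - g x₀) ∂ν₂ := by
    intro g hg ν₁ ν₂ h₁ h₂
    rw [integral_sub (cont_integrable _ hg.continuous) (integrable_const _),
        integral_sub (cont_integrable _ hg.continuous) (integrable_const _)]
    simp [integral_const]
  have habs : ∀ (g : X → ℝ), LipschitzWith 1 g → ∀ x : X, |g x - g x₀| ≤ D := by
    intro g hg x
    have := hg.dist_le_mul x x₀
    rw [Real.dist_eq] at this
    simpa using le_trans this (by simpa using hDd x x₀)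
  have hIbdd : ∀ (ν : Measure X), IsProbabilityMeasure ν → ∀ (h : X → ℝ), Continuous h →
      (∀ x, |h x| ≤ D) → |∫ x, h x ∂ν| ≤ D := by
    intro ν hνi h hc hb
    have := norm_integral_le_of_norm_le_const (μ := ν) (f := h) (C := D)
      (Filter.Eventually.of_forall fun x => by rw [Real.norm_eq_abs]; exact hb x)
    rwa [Real.norm_eq_abs, probReal_univ, mul_one] at this
  have hSbdd : ∀ n, BddAbove (S n) := by
    intro n
    refine ⟨2 * D, ?_⟩
    rintro d ⟨g, hg, rfl⟩
    rw [hnorm g hg _ _ inferInstance inferInstance]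
    have h1 := hIbdd (μseq n) inferInstance _ (hg.continuous.sub continuous_const) (habs g hg)
    have h2 := hIbdd μ inferInstance _ (hg.continuous.sub continuous_const) (habs g hg)
    rw [abs_le] at h1 h2 ⊢
    simp only [Pi.sub_apply] at h1 h2
    constructor <;> linarith
  have hdH0 : ∀ n, 0 ≤ dHutch (μseq n) μ := fun n => by
    rw [hdH]; exact le_csSup (hSbdd n) (hS0 n)
  -- key estimate
  have key : ∀ εp : ℝ, 0 < εp → ∀ᶠ n in atTop,
      dHutch (μseq n) μ ≤ Kr * dHutch (μseq n) μ + 2 * εp := by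
    intro εp hεp
    set e₁ : ℝ := εp / ((N:ℝ) * (D + 1)) with he₁def
    have he₁ : 0 < e₁ := by positivity
    have hp_ev : ∀ᶠ n in atTop, ∀ j, dist (pseq n j) (p j) < e₁ :=
      eventually_all.mpr fun j => (hpconv j).eventually (Metric.ball_mem_nhds (p j) he₁)
    have hf_ev : ∀ᶠ n in atTop, ∀ j, ∀ x, dist (f j x) (fseq n j x) < εp :=
      eventually_all.mpr fun j => (Metric.tendstoUniformly_iff.mp (hfconv j)) εp hεp
    filter_upwards [hp_ev, hf_ev] with n hpn hfn
    rw [hdH]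
    refine csSup_le ⟨0, hS0 n⟩ ?_
    rintro d ⟨g, hg, rfl⟩
    rw [hnorm g hg _ _ inferInstance inferInstance]
    set h : X → ℝ := fun x => g x - g x₀ with hhdef
    have hh : LipschitzWith 1 h := by
      refine LipschitzWith.of_dist_le_mul fun x y => ?_
      have := hg.dist_le_mul x y
      simpa [hhdef, Real.dist_eq, sub_sub_sub_cancel_right] using this
    have hhc : Continuous h := hh.continuous
    have hhb : ∀ x, |h x| ≤ D := habs g hg
    have eq1 : ∫ x, h x ∂(μseq n) = ∑ j, pseq n j * ∫ x, h (fseq n j x) ∂(μseq n) :=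
      integral_invariant_aux (μseq n) (hpseq n) (hfsc n) (hinvseq n) hhc
    have eq2 : ∫ x, h x ∂μ = ∑ j, p j * ∫ x, h (f j x) ∂μ :=
      integral_invariant_aux μ hp hfc hinv hhc
    set A : Fin N → ℝ := fun j => ∫ x, h (fseq n j x) ∂(μseq n) with hA
    set C : Fin N → ℝ := fun j => ∫ x, h (f j x) ∂(μseq n) with hC
    set Bq : Fin N → ℝ := fun j => ∫ x, h (f j x) ∂μ with hBq
    have term : ∀ j, |pseq n j * A j - p j * Bq j|
        ≤ |pseq n j - p j| * D + p j * εp + p j * (Kr * dHutch (μseq n) μ) := by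
      intro j
      have hA_bdd : |A j| ≤ D :=
        hIbdd (μseq n) inferInstance _ (hhc.comp (hfsc n j)) (fun x => hhb _)
      have hAC : |A j - C j| ≤ εp := by
        have heq : A j - C j = ∫ x, (h (fseq n j x) - h (f j x)) ∂(μseq n) :=
          (integral_sub (cont_integrable _ (hhc.comp (hfsc n j)))
            (cont_integrable _ (hhc.comp (hfc j)))).symm
        rw [heq]
        have := norm_integral_le_of_norm_le_const (μ := μseq n)
          (f := fun x => h (fseq n j x) - h (f j x)) (C := εp)
          (Filter.Eventually.of_forall fun x => by
            rw [Real.norm_eq_abs]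
            have h1 := hh.dist_le_mul (fseq n j x) (f j x)
            rw [Real.dist_eq] at h1
            have h2 := (hfn j x).le
            rw [dist_comm] at h2
            exact le_trans (by simpa using h1) h2)
        rwa [Real.norm_eq_abs, probReal_univ, mul_one] at this
      have hCB : |C j - Bq j| ≤ Kr * dHutch (μseq n) μ := by
        set φ : X → ℝ := fun x => Kr⁻¹ * h (f j x) with hφ
        have hφL : LipschitzWith 1 φ := by
          refine LipschitzWith.of_dist_le_mul fun x y => ?_
          have h1 := hh.dist_le_mul (f j x) (f j y)
          rw [Real.dist_eq] at h1
          have h3 : |h (f j x) - h (f j y)| ≤ Kr * dist x y :=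
            le_trans (by simpa using h1) (hKc j x y)
          rw [NNReal.coe_one, one_mul, Real.dist_eq, hφ,
            show Kr⁻¹ * h (f j x) - Kr⁻¹ * h (f j y) = Kr⁻¹ * (h (f j x) - h (f j y)) by ring,
            abs_mul, abs_of_pos (inv_pos.mpr hK0)]
          calc Kr⁻¹ * |h (f j x) - h (f j y)| ≤ Kr⁻¹ * (Kr * dist x y) :=
                mul_le_mul_of_nonneg_left h3 (inv_pos.mpr hK0).le
            _ = dist x y := by field_simp
        have hmem : |∫ x, φ x ∂(μseq n) - ∫ x, φ x ∂μ| ∈ S n := ⟨φ, hφL, rfl⟩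
        have hle := le_csSup (hSbdd n) hmem
        have heq : |∫ x, φ x ∂(μseq n) - ∫ x, φ x ∂μ| = Kr⁻¹ * |C j - Bq j| := by
          rw [hφ]
          rw [integral_const_mul, integral_const_mul,
            show Kr⁻¹ * (∫ x, h (f j x) ∂(μseq n)) - Kr⁻¹ * (∫ x, h (f j x) ∂μ)
              = Kr⁻¹ * ((∫ x, h (f j x) ∂(μseq n)) - ∫ x, h (f j x) ∂μ) by ring,
            abs_mul, abs_of_pos (inv_pos.mpr hK0)]
        rw [heq] at hle
        rw [hdH]
        calc |C j - Bq j| = Kr * (Kr⁻¹ * |C j - Bq j|) := by field_simp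
          _ ≤ Kr * sSup (S n) := mul_le_mul_of_nonneg_left hle hK0.le
      have split : pseq n j * A j - p j * Bq j
          = (pseq n j - p j) * A j + p j * (A j - C j) + p j * (C j - Bq j) := by ring
      rw [split]
      calc |(pseq n j - p j) * A j + p j * (A j - C j) + p j * (C j - Bq j)|
          ≤ |(pseq n j - p j) * A j + p j * (A j - C j)| + |p j * (C j - Bq j)| := abs_add_le _ _
        _ ≤ |(pseq n j - p j) * A j| + |p j * (A j - C j)| + |p j * (C j - Bq j)| := by
            have := abs_add_le ((pseq n j - p j) * A j) (p j * (A j - C j))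
            linarith
        _ ≤ |pseq n j - p j| * D + p j * εp + p j * (Kr * dHutch (μseq n) μ) := by
            rw [abs_mul, abs_mul, abs_mul, abs_of_nonneg (hp j)]
            have t1 : |pseq n j - p j| * |A j| ≤ |pseq n j - p j| * D :=
              mul_le_mul_of_nonneg_left hA_bdd (abs_nonneg _)
            have t2 : p j * |A j - C j| ≤ p j * εp :=
              mul_le_mul_of_nonneg_left hAC (hp j)
            have t3 : p j * |C j - Bq j| ≤ p j * (Kr * dHutch (μseq n) μ) :=
              mul_le_mul_of_nonneg_left hCB (hp j)
            linarith
    calc |∫ x, h x ∂(μseq n) - ∫ x, h x ∂μ|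
        = |∑ j, (pseq n j * A j - p j * Bq j)| := by
          rw [eq1, eq2, Finset.sum_sub_distrib]
      _ ≤ ∑ j, |pseq n j * A j - p j * Bq j| := Finset.abs_sum_le_sum_abs _ _
      _ ≤ ∑ j : Fin N, (|pseq n j - p j| * D + p j * εp + p j * (Kr * dHutch (μseq n) μ)) :=
          Finset.sum_le_sum fun j _ => term j
      _ = (∑ j, |pseq n j - p j|) * D + εp + Kr * dHutch (μseq n) μ := by
          rw [Finset.sum_add_distrib, Finset.sum_add_distrib, ← Finset.sum_mul,
            ← Finset.sum_mul, ← Finset.sum_mul, hpsum]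
          ring
      _ ≤ Kr * sSup (S n) + 2 * εp := by
          have hsum : (∑ j, |pseq n j - p j|) ≤ (N:ℝ) * e₁ := by
            calc (∑ j, |pseq n j - p j|) ≤ ∑ _j : Fin N, e₁ :=
                Finset.sum_le_sum fun j _ => by
                  have := hpn j; rw [Real.dist_eq] at this; exact this.le
              _ = (N:ℝ) * e₁ := by simp [mul_comm]
          have hbd : (∑ j, |pseq n j - p j|) * D ≤ εp := by
            have hpos : (0:ℝ) < (N:ℝ) * (D+1) := by positivity
            have heq2 : (N:ℝ) * e₁ * D = εp * (((N:ℝ)*D)/((N:ℝ)*(D+1))) := by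
              rw [he₁def]; field_simp
            have hr : ((N:ℝ)*D)/((N:ℝ)*(D+1)) ≤ 1 := by
              rw [div_le_one hpos]; nlinarith
            have : (N:ℝ) * e₁ * D ≤ εp := by
              rw [heq2]
              nlinarith [mul_nonneg hεp.le (sub_nonneg.mpr hr)]
            have hsige : (0:ℝ) ≤ ∑ j, |pseq n j - p j| :=
              Finset.sum_nonneg fun j _ => abs_nonneg _
            nlinarith
          rw [hdH]
          linarith
  -- Part 1: convergence in the Hutchinson metric
  have hTend : Tendsto (fun n => dHutch (μseq n) μ) atTop (𝓝 0) := by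
    rw [Metric.tendsto_atTop]
    intro ε hε
    have h1K : 0 < 1 - Kr := by linarith
    obtain ⟨N₀, hN₀⟩ := eventually_atTop.mp (key (ε * (1 - Kr) / 4) (by positivity))
    refine ⟨N₀, fun n hn => ?_⟩
    have h1 := hN₀ n hn
    have h2 := hdH0 n
    rw [Real.dist_eq, sub_zero, abs_of_nonneg h2]
    nlinarith
  refine ⟨hTend, ?_⟩
  -- Part 2: weak convergence
  intro g hg
  rw [Metric.tendsto_atTop]
  intro ε hε
  obtain ⟨Kr', h, hK'0, hhL, happ⟩ := lipschitz_approx g hg (by positivity : (0:ℝ) < ε / 4)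
  set L : ℝ := Kr' + 1 with hLdef
  have hL0 : 0 < L := by linarith
  have hhLip : ∀ x y : X, |h x - h y| ≤ Kr' * dist x y := by
    intro x y
    have := hhL.dist_le_mul x y
    rw [Real.dist_eq, Real.coe_toNNReal _ hK'0] at this
    exact this
  have hhc : Continuous h := hhL.continuous
  have hmid : ∀ n, |∫ x, h x ∂(μseq n) - ∫ x, h x ∂μ| ≤ L * dHutch (μseq n) μ := by
    intro n
    set φ : X → ℝ := fun x => L⁻¹ * h x with hφ
    have hφL : LipschitzWith 1 φ := by
      refine LipschitzWith.of_dist_le_mul fun x y => ?_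
      rw [NNReal.coe_one, one_mul, Real.dist_eq, hφ,
        show L⁻¹ * h x - L⁻¹ * h y = L⁻¹ * (h x - h y) by ring, abs_mul,
        abs_of_pos (inv_pos.mpr hL0)]
      have h3 : |h x - h y| ≤ L * dist x y :=
        le_trans (hhLip x y) (mul_le_mul_of_nonneg_right (by linarith) dist_nonneg)
      calc L⁻¹ * |h x - h y| ≤ L⁻¹ * (L * dist x y) :=
            mul_le_mul_of_nonneg_left h3 (inv_pos.mpr hL0).le
        _ = dist x y := by field_simp
    have hmem : |∫ x, φ x ∂(μseq n) - ∫ x, φ x ∂μ| ∈ S n := ⟨φ, hφL, rfl⟩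
    have hle := le_csSup (hSbdd n) hmem
    have heq : |∫ x, φ x ∂(μseq n) - ∫ x, φ x ∂μ|
        = L⁻¹ * |∫ x, h x ∂(μseq n) - ∫ x, h x ∂μ| := by
      rw [hφ, integral_const_mul, integral_const_mul,
        show L⁻¹ * ∫ x, h x ∂(μseq n) - L⁻¹ * ∫ x, h x ∂μ
          = L⁻¹ * (∫ x, h x ∂(μseq n) - ∫ x, h x ∂μ) by ring,
        abs_mul, abs_of_pos (inv_pos.mpr hL0)]
    rw [heq, ← hdH] at hle
    calc |∫ x, h x ∂(μseq n) - ∫ x, h x ∂μ|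
        = L * (L⁻¹ * |∫ x, h x ∂(μseq n) - ∫ x, h x ∂μ|) := by field_simp
      _ ≤ L * dHutch (μseq n) μ := mul_le_mul_of_nonneg_left hle hL0.le
  have hghbound : ∀ (ν : Measure X), IsProbabilityMeasure ν →
      |∫ x, g x ∂ν - ∫ x, h x ∂ν| ≤ ε / 4 := by
    intro ν hν
    rw [← integral_sub (cont_integrable _ hg) (cont_integrable _ hhc)]
    have := norm_integral_le_of_norm_le_const (μ := ν) (f := fun x => g x - h x) (C := ε / 4)
      (Filter.Eventually.of_forall fun x => by rw [Real.norm_eq_abs]; exact happ x)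
    rwa [Real.norm_eq_abs, probReal_univ, mul_one] at this
  have hεL : 0 < ε / (4 * L) := by positivity
  obtain ⟨N₀, hN₀⟩ := eventually_atTop.mp
    (hTend.eventually (Metric.ball_mem_nhds (0:ℝ) hεL))
  refine ⟨N₀, fun n hn => ?_⟩
  have hsmall := hN₀ n hn
  simp only [Metric.mem_ball, Real.dist_eq, sub_zero] at hsmall
  rw [abs_of_nonneg (hdH0 n)] at hsmall
  have h1 := hghbound (μseq n) inferInstance
  have h2 := hghbound μ inferInstance
  have h3 := hmid n
  have h4 : L * dHutch (μseq n) μ < ε / 4 := by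
    have := mul_lt_mul_of_pos_left hsmall hL0
    rw [show L * (ε / (4 * L)) = ε / 4 by field_simp] at this
    exact this
  rw [Real.dist_eq]
  have split : ∫ x, g x ∂(μseq n) - ∫ x, g x ∂μ
      = (∫ x, g x ∂(μseq n) - ∫ x, h x ∂(μseq n))
        + (∫ x, h x ∂(μseq n) - ∫ x, h x ∂μ)
        + (∫ x, h x ∂μ - ∫ x, g x ∂μ) := by ring
  rw [split]
  calc |_ + _ + (∫ x, h x ∂μ - ∫ x, g x ∂μ)|
      ≤ |(∫ x, g x ∂(μseq n) - ∫ x, h x ∂(μseq n)) + (∫ x, h x ∂(μseq n) - ∫ x, h x ∂μ)|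
        + |∫ x, h x ∂μ - ∫ x, g x ∂μ| := abs_add_le _ _
    _ ≤ |∫ x, g x ∂(μseq n) - ∫ x, h x ∂(μseq n)| + |∫ x, h x ∂(μseq n) - ∫ x, h x ∂μ|
        + |∫ x, h x ∂μ - ∫ x, g x ∂μ| := by
          have := abs_add_le (∫ x, g x ∂(μseq n) - ∫ x, h x ∂(μseq n))
            (∫ x, h x ∂(μseq n) - ∫ x, h x ∂μ)
          linarith
    _ < ε := by
          rw [abs_sub_comm] at h2
          have h5 : |∫ x, h x ∂(μseq n) - ∫ x, h x ∂μ| < ε / 4 := lt_of_le_of_lt h3 h4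
          nlinarith [hε, h1, h2, h5]
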